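/- Let p be an odd prime, m a positive integer with p ∤ m, and 0 < c < m. Then (−1)^{⌊pc/m⌋}·C(p−1, ⌊pc/m⌋) ≡ 1 + p·(B_{p−1}({pc/m}) − B_{p−1}) (mod p²), where the right-hand side is interpreted in ℤ_p (the difference B_{p−1}({pc/m}) − B_{p−1} lies in ℤ_p). -/

import Mathlib

open Finset

namespace Stmt16Aux

variable {p : ℕ} [hp : Fact p.Prime]
set_option linter.unusedSectionVars false

lemma eps_nonneg : (0:ℝ) ≤ (p:ℝ)⁻¹ := by positivity

lemma eps_le_one : (p:ℝ)⁻¹ ≤ 1 := by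
  rw [inv_le_one_iff₀]
  right
  exact_mod_cast hp.out.one_lt.le

lemma nadd (a b : ℚ_[p]) : ‖a + b‖ ≤ max ‖a‖ ‖b‖ := Padic.nonarchimedean a b

lemma nsub (a b : ℚ_[p]) : ‖a - b‖ ≤ max ‖a‖ ‖b‖ := by
  rw [sub_eq_add_neg]
  simpa using Padic.nonarchimedean a (-b)

lemma norm_nat_le_one (n : ℕ) : ‖(n : ℚ_[p])‖ ≤ 1 := by
  rw [← Int.cast_natCast (R := ℚ_[p])]
  exact Padic.norm_int_le_one (n : ℤ)

lemma norm_nat_eq_one {n : ℕ} (h : ¬ p ∣ n) : ‖(n : ℚ_[p])‖ = 1 := by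
  refine le_antisymm (norm_nat_le_one n) ?_
  by_contra hlt
  push_neg at hlt
  rw [← Int.cast_natCast (R := ℚ_[p])] at hlt
  have := (Padic.norm_intCast_lt_one_iff (k := (n : ℤ))).mp hlt
  exact h (by exact_mod_cast this)

lemma norm_int_dvd_le {z : ℤ} (h : (p:ℤ) ∣ z) : ‖(z : ℚ_[p])‖ ≤ (p:ℝ)⁻¹ := by
  obtain ⟨w, rfl⟩ := h
  push_cast
  rw [norm_mul, Padic.norm_p]
  calc (p:ℝ)⁻¹ * ‖(w : ℚ_[p])‖ ≤ (p:ℝ)⁻¹ * 1 :=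
        mul_le_mul_of_nonneg_left (Padic.norm_int_le_one w) eps_nonneg
    _ = (p:ℝ)⁻¹ := mul_one _

/-- Nonarchimedean product approximation: ∏(1+xᵢ) ≈ 1 + ∑xᵢ mod ε². -/
lemma prod_approx (n : ℕ) (x : ℕ → ℚ_[p]) (h : ∀ i, i < n → ‖x i‖ ≤ (p:ℝ)⁻¹) :
    ‖∏ i ∈ range n, (1 + x i) - (1 + ∑ i ∈ range n, x i)‖ ≤ (p:ℝ)⁻¹ ^ 2 := by
  induction n with
  | zero => simp [eps_nonneg]
  | succ n ih =>
    have hsum : ‖∑ i ∈ range n, x i‖ ≤ (p:ℝ)⁻¹ :=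
      IsUltrametricDist.norm_sum_le_of_forall_le_of_nonneg eps_nonneg
        (fun i hi => h i (lt_of_lt_of_le (mem_range.mp hi) n.le_succ))
    have ihn := ih (fun i hi => h i (hi.trans n.lt_succ_self))
    have hP1 : ‖∏ i ∈ range n, (1 + x i) - 1‖ ≤ (p:ℝ)⁻¹ := by
      have : ∏ i ∈ range n, (1 + x i) - 1
          = (∏ i ∈ range n, (1 + x i) - (1 + ∑ i ∈ range n, x i)) + ∑ i ∈ range n, x i := by
        ring
      rw [this]
      refine (nadd _ _).trans (max_le ?_ hsum)
      exact ihn.trans (by nlinarith [eps_nonneg (p := p), eps_le_one (p := p)])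
    have key : ∏ i ∈ range (n+1), (1 + x i) - (1 + ∑ i ∈ range (n+1), x i)
        = (∏ i ∈ range n, (1 + x i) - (1 + ∑ i ∈ range n, x i))
          + x n * (∏ i ∈ range n, (1 + x i) - 1) := by
      rw [prod_range_succ, sum_range_succ]; ring
    rw [key]
    refine (nadd _ _).trans (max_le ihn ?_)
    rw [norm_mul, sq]
    exact mul_le_mul (h n n.lt_succ_self) hP1 (norm_nonneg _) eps_nonneg

/-- (-1)^n * C(p-1, n) as a product. -/
lemma choose_prod (n : ℕ) (hn : n ≤ p - 1) :
    ((-1:ℚ))^n * ((p-1).choose n : ℚ) = ∏ j ∈ range n, (1 - (p:ℚ)/(j+1)) := by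
  induction n with
  | zero => simp
  | succ n ih =>
    have hn' : n ≤ p - 1 := n.le_succ.trans hn
    have hchoose : ((p-1).choose (n+1) : ℚ) * (n+1) = ((p-1).choose n : ℚ) * ((p:ℚ) - 1 - n) := by
      have h1 : (p-1).choose (n+1) * (n+1) = (p-1).choose n * (p - 1 - n) :=
        Nat.choose_succ_right_eq (p-1) n
      have h2 : ((p - 1 - n : ℕ) : ℚ) = (p:ℚ) - 1 - n := by
        rw [Nat.cast_sub hn', Nat.cast_sub hp.out.one_lt.le]
        push_cast; ring
      calc ((p-1).choose (n+1) : ℚ) * (n+1)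
          = (((p-1).choose (n+1) * (n+1) : ℕ) : ℚ) := by push_cast; ring
        _ = (((p-1).choose n * (p - 1 - n) : ℕ) : ℚ) := by rw [h1]
        _ = ((p-1).choose n : ℚ) * ((p:ℚ) - 1 - n) := by rw [Nat.cast_mul, h2]
    rw [prod_range_succ, ← ih hn']
    have hne : ((n:ℚ)+1) ≠ 0 := by positivity
    have : ((p-1).choose (n+1) : ℚ) = ((p-1).choose n : ℚ) * ((p:ℚ) - 1 - n) / (n+1) := by
      field_simp at hchoose ⊢
      linarith [hchoose]
    rw [this, pow_succ]
    field_simp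
    ring

lemma norm_rat_nat_le_one (n : ℕ) : ‖((n : ℚ) : ℚ_[p])‖ ≤ 1 := by
  rw [Rat.cast_natCast]; exact norm_nat_le_one n

lemma sum_pow_dvd {k : ℕ} (hk : k < p - 1) : (p:ℤ) ∣ ((∑ j ∈ range p, j^k : ℕ) : ℤ) := by
  have hzero : ((∑ j ∈ range p, j^k : ℕ) : ZMod p) = 0 := by
    push_cast
    have hbij : ∑ j ∈ range p, ((j : ZMod p))^k = ∑ x : ZMod p, x^k := by
      refine Finset.sum_bij' (fun j _ => (j : ZMod p)) (fun x _ => x.val)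
        (fun a ha => Finset.mem_univ _) (fun x _ => ?_) (fun a ha => ?_) (fun x _ => ?_)
        (fun a ha => rfl)
      · exact mem_range.mpr (ZMod.val_lt x)
      · exact ZMod.val_natCast_of_lt (mem_range.mp ha)
      · exact ZMod.natCast_rightInverse x
    rw [hbij]
    exact FiniteField.sum_pow_lt_card_sub_one (K := ZMod p) k (by rw [ZMod.card p]; exact hk)
  exact_mod_cast (ZMod.natCast_eq_zero_iff _ p).mp hzero

/-- p-integrality of Bernoulli numbers below p-1 (von Staudt–Clausen consequence). -/
lemma bernoulli_norm_le : ∀ k, k < p - 1 → ‖((bernoulli k : ℚ) : ℚ_[p])‖ ≤ 1 := by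
  intro k
  induction k using Nat.strong_induction_on with
  | _ k ih =>
    intro hk
    have hfaul := sum_range_pow p k
    -- split off the i = k term
    rw [Finset.sum_range_succ] at hfaul
    have hk1 : ((k:ℚ) + 1) ≠ 0 := by positivity
    have hlast : (bernoulli k : ℚ) * ((k+1).choose k) * (p:ℚ)^(k+1-k) / (k+1)
        = (p:ℚ) * bernoulli k := by
      rw [Nat.choose_succ_self_right]
      have : k + 1 - k = 1 := by omega
      rw [this]
      push_cast
      field_simp
    rw [hlast] at hfaul
    have key : (p:ℚ) * bernoulli k
        = (∑ j ∈ range p, (j:ℚ)^k)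
          - ∑ i ∈ range k, bernoulli i * ((k+1).choose i) * (p:ℚ)^(k+1-i) / (k+1) := by
      rw [hfaul]; ring
    have hnorm : ‖(((p:ℚ) * bernoulli k : ℚ) : ℚ_[p])‖ ≤ (p:ℝ)⁻¹ := by
      rw [key]
      push_cast
      refine (nsub _ _).trans (max_le ?_ ?_)
      · -- the power sum is divisible by p
        have heq : (∑ j ∈ range p, ((j:ℚ_[p]))^k) = (((∑ j ∈ range p, j^k : ℕ) : ℤ) : ℚ_[p]) := by
          push_cast
          ring
        rw [heq]
        exact norm_int_dvd_le (sum_pow_dvd hk)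
      · refine IsUltrametricDist.norm_sum_le_of_forall_le_of_nonneg eps_nonneg ?_
        intro i hi
        have hi' : i < k := mem_range.mp hi
        have h1 : ‖((bernoulli i : ℚ) : ℚ_[p])‖ ≤ 1 := ih i hi' (hi'.trans hk)
        have h2 : ‖(((k+1).choose i : ℕ) : ℚ_[p])‖ ≤ 1 := norm_nat_le_one _
        have h3 : ‖((p:ℚ_[p]))^(k+1-i)‖ ≤ (p:ℝ)⁻¹ := by
          rw [norm_pow, Padic.norm_p]
          calc ((p:ℝ)⁻¹)^(k+1-i) ≤ ((p:ℝ)⁻¹)^1 := by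
                refine pow_le_pow_of_le_one eps_nonneg eps_le_one ?_
                omega
            _ = (p:ℝ)⁻¹ := pow_one _
        have h4 : ‖(((k:ℚ_[p])+1))⁻¹‖ ≤ 1 := by
          have hnd : ¬ p ∣ (k+1) := by
            intro hdvd
            have := Nat.le_of_dvd (k.succ_pos) hdvd
            omega
          have : ((k:ℚ_[p])+1) = ((k+1 : ℕ) : ℚ_[p]) := by push_cast; ring
          rw [this, norm_inv, norm_nat_eq_one hnd]
          norm_num
        rw [div_eq_mul_inv, norm_mul, norm_mul, norm_mul]
        calc ‖((bernoulli i : ℚ) : ℚ_[p])‖ * ‖(((k+1).choose i : ℕ) : ℚ_[p])‖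
              * ‖((p:ℚ_[p]))^(k+1-i)‖ * ‖(((k:ℚ_[p])+1))⁻¹‖
            ≤ 1 * 1 * (p:ℝ)⁻¹ * 1 := by
              gcongr
          _ = (p:ℝ)⁻¹ := by ring
    have hp0 : ‖((p:ℚ):ℚ_[p])‖ = (p:ℝ)⁻¹ := by
      rw [Rat.cast_natCast]; exact Padic.norm_p
    rw [Rat.cast_mul, norm_mul, hp0] at hnorm
    have hppos : (0:ℝ) < (p:ℝ)⁻¹ := by
      have := hp.out.pos; positivity
    calc ‖((bernoulli k : ℚ) : ℚ_[p])‖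
        = ((p:ℝ)⁻¹ * ‖((bernoulli k : ℚ) : ℚ_[p])‖) / (p:ℝ)⁻¹ := (mul_div_cancel_left₀ _ hppos.ne').symm
      _ ≤ (p:ℝ)⁻¹ / (p:ℝ)⁻¹ := by gcongr
      _ = 1 := div_self hppos.ne'

/-- Telescoping: `B_{p-1}(-r) = B_{p-1} + (p-1) * ∑_{j<r} (j+1)^{p-2}`. -/
lemma eval_neg_nat (hodd : Odd p) (r : ℕ) :
    (Polynomial.bernoulli (p-1)).eval (-(r:ℚ))
      = bernoulli (p-1) + ((p-1 : ℕ) : ℚ) * ∑ j ∈ range r, ((j:ℚ)+1)^(p-2) := by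
  induction r with
  | zero => simp
  | succ r ih =>
    have h3 : 3 ≤ p := by
      rcases hodd with ⟨t, ht⟩
      have := hp.out.two_le
      omega
    have hodd2 : Odd (p - 2) := by
      rcases hodd with ⟨t, ht⟩
      exact ⟨t - 1, by omega⟩
    have h := Polynomial.bernoulli_eval_one_add (p-1) (-((r:ℚ)+1))
    have hL : (1 : ℚ) + -((r:ℚ)+1) = -(r:ℚ) := by ring
    rw [hL] at h
    have hpow : (-((r:ℚ)+1))^(p-1-1) = -(((r:ℚ)+1)^(p-2)) := by
      have h21 : p - 1 - 1 = p - 2 := by omega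
      rw [h21, hodd2.neg_pow]
    rw [hpow] at h
    have hcast : (-(((r+1) : ℕ) : ℚ)) = -((r:ℚ)+1) := by push_cast; ring
    calc (Polynomial.bernoulli (p-1)).eval (-(((r+1) : ℕ):ℚ))
        = (Polynomial.bernoulli (p-1)).eval (-((r:ℚ)+1)) := by rw [hcast]
      _ = (Polynomial.bernoulli (p-1)).eval (-(r:ℚ)) + ((p-1:ℕ):ℚ) * ((r:ℚ)+1)^(p-2) := by
          linarith [h]
      _ = bernoulli (p-1) + ((p-1 : ℕ) : ℚ) * ∑ j ∈ range (r+1), ((j:ℚ)+1)^(p-2) := by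
          rw [ih, sum_range_succ]; ring

lemma bernoulli_poly_coeff (n k : ℕ) (h : k ≤ n) :
    (Polynomial.bernoulli n).coeff k = bernoulli (n - k) * n.choose k := by
  rw [Polynomial.bernoulli_def, Polynomial.finset_sum_coeff]
  simp only [Polynomial.coeff_monomial]
  rw [Finset.sum_ite_eq' (range (n+1)) k]
  simp [Nat.lt_succ_of_le h]

lemma bernoulli_natDegree_le (n : ℕ) : (Polynomial.bernoulli n).natDegree ≤ n := by
  rw [Polynomial.bernoulli]
  refine Polynomial.natDegree_sum_le_of_forall_le _ _ ?_
  intro i _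
  exact (Polynomial.natDegree_monomial_le _).trans (by omega)

lemma fermat_norm {j : ℕ} (hj : ¬ p ∣ j) :
    ‖((j:ℚ_[p]))^(p-1) - 1‖ ≤ (p:ℝ)⁻¹ := by
  have hz : (j : ZMod p) ≠ 0 := by
    rw [Ne, ZMod.natCast_eq_zero_iff]
    exact hj
  have hdvd : (p:ℤ) ∣ ((j:ℤ)^(p-1) - 1) := by
    have h0 : (((j:ℤ)^(p-1) - 1 : ℤ) : ZMod p) = 0 := by
      push_cast
      rw [ZMod.pow_card_sub_one_eq_one hz]
      ring
    exact_mod_cast (ZMod.intCast_zmod_eq_zero_iff_dvd _ p).mp h0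
  have h := norm_int_dvd_le hdvd
  push_cast at h
  exact h

lemma eval_diff_norm (f g : ℚ) (hf : ‖(f:ℚ_[p])‖ ≤ 1) (hg : ‖(g:ℚ_[p])‖ ≤ 1)
    (hfg : ‖((f:ℚ_[p])) - ((g:ℚ_[p]))‖ ≤ (p:ℝ)⁻¹) :
    ‖(((Polynomial.bernoulli (p-1)).eval f : ℚ) : ℚ_[p])
      - (((Polynomial.bernoulli (p-1)).eval g : ℚ) : ℚ_[p])‖ ≤ (p:ℝ)⁻¹ := by
  have hp2 : 2 ≤ p := hp.out.two_le
  have hdeg : (Polynomial.bernoulli (p-1)).natDegree < p :=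
    lt_of_le_of_lt (bernoulli_natDegree_le _) (by omega)
  rw [Polynomial.eval_eq_sum_range' hdeg f, Polynomial.eval_eq_sum_range' hdeg g]
  push_cast
  rw [← Finset.sum_sub_distrib]
  refine IsUltrametricDist.norm_sum_le_of_forall_le_of_nonneg eps_nonneg ?_
  intro i hi
  rcases Nat.eq_zero_or_pos i with h0 | hpos
  · subst h0; simp [eps_nonneg]
  have hile : i ≤ p - 1 := by have := mem_range.mp hi; omega
  have hcoeff : ‖(((Polynomial.bernoulli (p-1)).coeff i : ℚ) : ℚ_[p])‖ ≤ 1 := by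
    rw [bernoulli_poly_coeff _ _ hile]
    push_cast
    rw [norm_mul]
    have hb : ‖((bernoulli (p-1-i) : ℚ) : ℚ_[p])‖ ≤ 1 :=
      bernoulli_norm_le _ (by omega)
    calc ‖((bernoulli (p-1-i) : ℚ) : ℚ_[p])‖ * ‖(((p-1).choose i : ℕ) : ℚ_[p])‖
        ≤ 1 * 1 := mul_le_mul hb (norm_nat_le_one _) (norm_nonneg _) zero_le_one
      _ = 1 := by ring
  have hpow : ‖((f:ℚ_[p]))^i - ((g:ℚ_[p]))^i‖ ≤ (p:ℝ)⁻¹ := by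
    rw [← geom_sum₂_mul, norm_mul]
    have hsum : ‖∑ j ∈ range i, ((f:ℚ_[p]))^j * ((g:ℚ_[p]))^(i-1-j)‖ ≤ 1 := by
      refine IsUltrametricDist.norm_sum_le_of_forall_le_of_nonneg zero_le_one ?_
      intro j _
      rw [norm_mul, norm_pow, norm_pow]
      calc ‖(f:ℚ_[p])‖^j * ‖(g:ℚ_[p])‖^(i-1-j) ≤ 1^j * 1^(i-1-j) := by
            gcongr
        _ = 1 := by ring
    calc ‖∑ j ∈ range i, ((f:ℚ_[p]))^j * ((g:ℚ_[p]))^(i-1-j)‖ * ‖(f:ℚ_[p]) - (g:ℚ_[p])‖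
        ≤ 1 * (p:ℝ)⁻¹ := mul_le_mul hsum hfg (norm_nonneg _) zero_le_one
      _ = (p:ℝ)⁻¹ := by ring
  rw [← mul_sub, norm_mul]
  calc ‖(((Polynomial.bernoulli (p-1)).coeff i : ℚ) : ℚ_[p])‖ * ‖((f:ℚ_[p]))^i - ((g:ℚ_[p]))^i‖
      ≤ 1 * (p:ℝ)⁻¹ := mul_le_mul hcoeff hpow (norm_nonneg _) zero_le_one
    _ = (p:ℝ)⁻¹ := by ring

end Stmt16Aux

theorem stmt_16 (p m c : ℕ) (hp : p.Prime) (hodd : Odd p) (hpm : ¬ p ∣ m)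
    (hc : 0 < c) (hcm : c < m) :
    padicNorm p
        (((-1 : ℚ) ^ (p * c / m) * (Nat.choose (p - 1) (p * c / m) : ℚ))
          - (1 + (p : ℚ) * ((Polynomial.bernoulli (p - 1)).eval
              (Int.fract ((p * c : ℚ) / m)) - bernoulli (p - 1))))
      ≤ (p : ℚ) ^ (-2 : ℤ) := by
  haveI hfp : Fact p.Prime := ⟨hp⟩
  open Stmt16Aux in
  have hm0 : 0 < m := hc.trans hcm
  have hp2 : 2 ≤ p := hp.two_le
  set r : ℕ := p * c / m with hrdef
  have hrp : r < p := by
    rw [hrdef, Nat.div_lt_iff_lt_mul hm0]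
    exact mul_lt_mul_of_pos_left hcm hp.pos
  -- the rational x = pc/m and its fractional part
  set x : ℚ := (p * c : ℚ) / m with hxdef
  have hfloor : ⌊x⌋ = (r : ℤ) := by
    have h := Rat.floor_natCast_div_natCast (p*c) m
    rw [hxdef]
    push_cast at h ⊢
    exact h
  have hfract : Int.fract x = x - (r:ℚ) := by
    rw [Int.fract, hfloor]; push_cast; ring
  set F : ℚ := Int.fract x with hFdef
  -- norms
  have hxnorm : ‖(x : ℚ_[p])‖ ≤ (p:ℝ)⁻¹ := by
    rw [hxdef]
    push_cast
    rw [div_eq_mul_inv, norm_mul, norm_mul, norm_inv, Padic.norm_p,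
      norm_nat_eq_one hpm]
    calc (p:ℝ)⁻¹ * ‖(c : ℚ_[p])‖ * 1⁻¹ = (p:ℝ)⁻¹ * ‖(c : ℚ_[p])‖ := by ring
      _ ≤ (p:ℝ)⁻¹ * 1 := mul_le_mul_of_nonneg_left (norm_nat_le_one c) eps_nonneg
      _ = (p:ℝ)⁻¹ := by ring
  have hrnorm : ‖((r:ℚ) : ℚ_[p])‖ ≤ 1 := norm_rat_nat_le_one r
  have hFnorm : ‖(F : ℚ_[p])‖ ≤ 1 := by
    rw [hfract]
    push_cast
    refine (nsub _ _).trans (max_le (hxnorm.trans eps_le_one) ?_)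
    exact norm_nat_le_one r
  -- the product representation
  have hr1 : r ≤ p - 1 := by omega
  have hA : ((((-1 : ℚ)) ^ r * ((p-1).choose r : ℚ) : ℚ) : ℚ_[p])
      = ∏ j ∈ range r, (1 + (-(p:ℚ_[p]) / ((j:ℚ_[p])+1))) := by
    rw [choose_prod r hr1]
    push_cast
    refine Finset.prod_congr rfl ?_
    intro j _
    rw [neg_div]
    ring
  -- each factor deviation has norm ≤ 1/p
  have hxj : ∀ i, i < r → ‖-(p:ℚ_[p]) / ((i:ℚ_[p])+1)‖ ≤ (p:ℝ)⁻¹ := by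
    intro i hir
    have hnd : ¬ p ∣ (i+1) := by
      intro hdvd
      have := Nat.le_of_dvd (i.succ_pos) hdvd
      omega
    have h1 : ((i:ℚ_[p])+1) = ((i+1 : ℕ) : ℚ_[p]) := by push_cast; ring
    rw [norm_div, norm_neg, Padic.norm_p, h1, norm_nat_eq_one hnd, div_one]
  have hstep2 := prod_approx r (fun i => -(p:ℚ_[p]) / ((i:ℚ_[p])+1)) hxj
  -- Step 3 : ‖D + H‖ ≤ 1/p
  set H : ℚ_[p] := ∑ j ∈ range r, ((j:ℚ_[p])+1)⁻¹ with hHdef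
  set Sq : ℚ := ∑ j ∈ range r, ((j:ℚ)+1)^(p-2) with hSqdef
  have hSqnorm : ‖(Sq : ℚ_[p])‖ ≤ 1 := by
    have : Sq = ((∑ j ∈ range r, (j+1)^(p-2) : ℕ) : ℚ) := by
      rw [hSqdef]; push_cast; ring
    rw [this, Rat.cast_natCast]
    exact norm_nat_le_one _
  have hD : (Polynomial.bernoulli (p-1)).eval F - bernoulli (p-1)
      = ((Polynomial.bernoulli (p-1)).eval F - (Polynomial.bernoulli (p-1)).eval (-(r:ℚ)))
        + ((p-1:ℕ):ℚ) * Sq := by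
    rw [eval_neg_nat hodd r]
    ring
  have hE1 : ‖(((Polynomial.bernoulli (p-1)).eval F : ℚ) : ℚ_[p])
      - (((Polynomial.bernoulli (p-1)).eval (-(r:ℚ)) : ℚ) : ℚ_[p])‖ ≤ (p:ℝ)⁻¹ := by
    refine eval_diff_norm F (-(r:ℚ)) hFnorm ?_ ?_
    · push_cast
      rw [norm_neg]
      exact norm_nat_le_one r
    · have : (F : ℚ_[p]) - ((-(r:ℚ) : ℚ) : ℚ_[p]) = (x : ℚ_[p]) := by
        rw [hfract]
        push_cast
        ring
      rw [this]
      exact hxnorm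
  have hHSq : ‖H - (Sq : ℚ_[p])‖ ≤ (p:ℝ)⁻¹ := by
    have hcast : (Sq : ℚ_[p]) = ∑ j ∈ range r, ((j:ℚ_[p])+1)^(p-2) := by
      rw [hSqdef]; push_cast; ring
    rw [hHdef, hcast, ← Finset.sum_sub_distrib]
    refine IsUltrametricDist.norm_sum_le_of_forall_le_of_nonneg eps_nonneg ?_
    intro j hj
    have hjr : j < r := mem_range.mp hj
    have hnd : ¬ p ∣ (j+1) := by
      intro hdvd
      have := Nat.le_of_dvd (j.succ_pos) hdvd
      omega
    have h1 : ((j:ℚ_[p])+1) = ((j+1 : ℕ) : ℚ_[p]) := by push_cast; ring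
    have hune : ‖((j+1 : ℕ) : ℚ_[p])‖ = 1 := norm_nat_eq_one hnd
    have hne : ((j+1 : ℕ) : ℚ_[p]) ≠ 0 := by
      intro h0
      rw [h0, norm_zero] at hune
      norm_num at hune
    have hpow1 : ((j+1:ℕ):ℚ_[p])^(p-1) = ((j+1:ℕ):ℚ_[p])^(p-2) * ((j+1:ℕ):ℚ_[p]) := by
      rw [← pow_succ]
      congr 1
      omega
    have hkey : ((j:ℚ_[p])+1)⁻¹ - ((j:ℚ_[p])+1)^(p-2)
        = (((j+1:ℕ):ℚ_[p]))⁻¹ * (1 - (((j+1:ℕ):ℚ_[p]))^(p-1)) := by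
      rw [h1, hpow1, mul_sub, mul_one]
      congr 1
      rw [inv_mul_eq_div, mul_div_assoc, div_self hne, mul_one]
    rw [hkey, norm_mul, norm_inv, hune, inv_one, one_mul, norm_sub_rev]
    exact fermat_norm hnd
  -- assemble step 3
  have hstep3 : ‖(((Polynomial.bernoulli (p-1)).eval F - bernoulli (p-1) : ℚ) : ℚ_[p]) + H‖
      ≤ (p:ℝ)⁻¹ := by
    have hsplit : (((Polynomial.bernoulli (p-1)).eval F - bernoulli (p-1) : ℚ) : ℚ_[p]) + H
        = ((((Polynomial.bernoulli (p-1)).eval F : ℚ) : ℚ_[p])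
            - (((Polynomial.bernoulli (p-1)).eval (-(r:ℚ)) : ℚ) : ℚ_[p]))
          + ((p:ℚ_[p]) * (Sq : ℚ_[p]) + (H - (Sq : ℚ_[p]))) := by
      rw [hD]
      push_cast [Nat.cast_sub (by omega : 1 ≤ p)]
      ring
    rw [hsplit]
    refine (nadd _ _).trans (max_le hE1 ((nadd _ _).trans (max_le ?_ hHSq)))
    rw [norm_mul, Padic.norm_p]
    calc (p:ℝ)⁻¹ * ‖(Sq : ℚ_[p])‖ ≤ (p:ℝ)⁻¹ * 1 :=
          mul_le_mul_of_nonneg_left hSqnorm eps_nonneg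
      _ = (p:ℝ)⁻¹ := by ring
  -- final assembly
  set G : ℚ := ((-1 : ℚ) ^ r * ((p-1).choose r : ℚ))
      - (1 + (p : ℚ) * ((Polynomial.bernoulli (p - 1)).eval F - bernoulli (p - 1))) with hGdef
  have hT : ∑ j ∈ range r, (-(p:ℚ_[p]) / ((j:ℚ_[p])+1)) = -((p:ℚ_[p]) * H) := by
    rw [hHdef, Finset.mul_sum, ← Finset.sum_neg_distrib]
    refine Finset.sum_congr rfl ?_
    intro j _
    rw [neg_div, div_eq_mul_inv]
  have hGsplit : (G : ℚ_[p])
      = (∏ j ∈ range r, (1 + (-(p:ℚ_[p]) / ((j:ℚ_[p])+1)))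
          - (1 + ∑ j ∈ range r, (-(p:ℚ_[p]) / ((j:ℚ_[p])+1))))
        + (-((p:ℚ_[p]) * ((((Polynomial.bernoulli (p-1)).eval F - bernoulli (p-1) : ℚ) : ℚ_[p]) + H))) := by
    rw [← hA, hT, hGdef]
    push_cast
    ring
  have hGnorm : ‖(G : ℚ_[p])‖ ≤ (p:ℝ)⁻¹ ^ 2 := by
    rw [hGsplit]
    refine (nadd _ _).trans (max_le hstep2 ?_)
    rw [norm_neg, norm_mul, Padic.norm_p, sq]
    exact mul_le_mul_of_nonneg_left hstep3 eps_nonneg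
  -- convert to padicNorm
  have hre : ((padicNorm p G : ℚ) : ℝ) ≤ (((p:ℚ) ^ (-2 : ℤ) : ℚ) : ℝ) := by
    rw [← Padic.eq_padicNorm]
    refine hGnorm.trans (le_of_eq ?_)
    push_cast
    rw [zpow_neg, inv_pow]
    norm_cast
  exact_mod_cast hre
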